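/- Let p > 2 and let u : ℝ → ℝ be a 2π-periodic, strictly positive, C² function. Then (1/(2π))∫₀^{2π} u(x)^{1−p} · (L_p u)(x) · |u'(x)|^p dx = ((p−1)²/(2p−1)) · (1/(2π))∫₀^{2π} u(x)^{−p} |u'(x)|^{2p} dx, where L_p u := (|u'|^{p−2}u')'. In particular this quantity is nonnegative. -/

import Mathlib

open MeasureTheory Real

/-- The L^r norm on the circle with the uniform probability measure dσ = dx/(2π),
for a 2π-periodic function `u : ℝ → ℝ`. -/
noncomputable def perNorm (r : ℝ) (u : ℝ → ℝ) : ℝ :=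
  ((1 / (2 * π)) * ∫ x in (0:ℝ)..(2 * π), |u x| ^ r) ^ (1 / r)

/-- `u` is 2π-periodic and C¹. -/
def PeriodicC1 (u : ℝ → ℝ) : Prop :=
  Function.Periodic u (2 * π) ∧ ContDiff ℝ 1 u

/-- λ₁ = inf ‖v'‖_p²/‖v‖_p² over 2π-periodic C¹ functions v ≢ 0 with ∫₀^{2π} v dx = 0. -/
noncomputable def lambdaOne (p : ℝ) : ℝ :=
  sInf { l : ℝ | ∃ v : ℝ → ℝ, PeriodicC1 v ∧ v ≠ 0 ∧
    (∫ x in (0:ℝ)..(2 * π), v x) = 0 ∧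
    l = (perNorm p (deriv v)) ^ 2 / (perNorm p v) ^ 2 }

/-- λ₁* = inf ‖v'‖_p²/‖v‖_2² over 2π-periodic C¹ functions v ≢ 0 with ∫₀^{2π} v dx = 0. -/
noncomputable def lambdaOneStar (p : ℝ) : ℝ :=
  sInf { l : ℝ | ∃ v : ℝ → ℝ, PeriodicC1 v ∧ v ≠ 0 ∧
    (∫ x in (0:ℝ)..(2 * π), v x) = 0 ∧
    l = (perNorm p (deriv v)) ^ 2 / (perNorm 2 v) ^ 2 }

/-- The p-Laplacian L_p u = (|u'|^{p-2} u')'. -/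
noncomputable def pLap (p : ℝ) (u : ℝ → ℝ) : ℝ → ℝ :=
  deriv (fun x => |deriv u x| ^ (p - 2) * deriv u x)


lemma hasDerivAt_abs_rpow_mul {q : ℝ} (hq : 0 < q) (t : ℝ) :
    HasDerivAt (fun s : ℝ => |s| ^ q * s) ((q + 1) * |t| ^ q) t := by
  rcases lt_trichotomy t 0 with ht | rfl | ht
  · have hneg : HasDerivAt (fun s : ℝ => -s) (-1) t := (hasDerivAt_id t).neg
    have h1 : HasDerivAt (fun s : ℝ => (-s) ^ q * s)
        ((-1) * q * (-t) ^ (q - 1) * t + (-t) ^ q * 1) t :=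
      (hneg.rpow_const (Or.inl (by linarith))).mul (hasDerivAt_id t)
    have heq : (-1) * q * (-t) ^ (q - 1) * t + (-t) ^ q * 1 = (q + 1) * |t| ^ q := by
      have h2 : (-t) ^ q = (-t) ^ (q - 1) * (-t) ^ (1:ℝ) := by
        rw [← Real.rpow_add (by linarith)]; ring_nf
      rw [abs_of_neg ht, h2, Real.rpow_one]; ring
    have h3 : HasDerivAt (fun s : ℝ => (-s) ^ q * s) ((q + 1) * |t| ^ q) t := heq ▸ h1
    refine h3.congr_of_eventuallyEq ?_
    filter_upwards [eventually_lt_nhds ht] with s hs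
    rw [abs_of_neg hs]
  · rw [hasDerivAt_iff_tendsto_slope]
    have h0 : |(0:ℝ)| ^ q = 0 := by rw [abs_zero, Real.zero_rpow hq.ne']
    rw [h0, mul_zero]
    have htend : Filter.Tendsto (fun h : ℝ => |h| ^ q) (nhdsWithin 0 {(0:ℝ)}ᶜ) (nhds 0) := by
      have := ((continuous_abs.rpow_const (fun _ => Or.inr hq.le)).tendsto 0)
      rw [h0] at this
      exact this.mono_left nhdsWithin_le_nhds
    refine htend.congr' ?_
    filter_upwards [self_mem_nhdsWithin] with h hh
    simp only [Set.mem_compl_iff, Set.mem_singleton_iff] at hh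
    rw [slope_def_field]
    field_simp
    simp
  · have h1 : HasDerivAt (fun s : ℝ => s ^ (q + 1)) (1 * (q + 1) * t ^ (q + 1 - 1)) t :=
      (hasDerivAt_id t).rpow_const (Or.inl ht.ne')
    have heq : 1 * (q + 1) * t ^ (q + 1 - 1) = (q + 1) * |t| ^ q := by
      rw [abs_of_pos ht]; ring_nf
    have h3 : HasDerivAt (fun s : ℝ => s ^ (q + 1)) ((q + 1) * |t| ^ q) t := heq ▸ h1
    refine h3.congr_of_eventuallyEq ?_
    filter_upwards [eventually_gt_nhds ht] with s hs
    rw [abs_of_pos hs, Real.rpow_add hs, Real.rpow_one]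

lemma periodic_deriv' {u : ℝ → ℝ} (hper : Function.Periodic u (2 * π)) :
    ∀ x, deriv u (x + 2 * π) = deriv u x := by
  intro x
  have h1 : deriv (fun y => u (y + 2 * π)) x = deriv u (x + 2 * π) := by
    rw [deriv_comp_add_const]
  have h2 : (fun y => u (y + 2 * π)) = u := funext fun y => hper y
  rw [h2] at h1
  exact h1.symm

/-- the integration-by-parts identity for positive periodic functions,
and its nonnegativity. -/
theorem ibp_identity (p : ℝ) (hp : 2 < p) (u : ℝ → ℝ)
    (hper : Function.Periodic u (2 * π)) (hpos : ∀ x, 0 < u x)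
    (hC2 : ContDiff ℝ 2 u) :
    (1 / (2 * π)) * (∫ x in (0:ℝ)..(2 * π), (u x) ^ (1 - p) * pLap p u x * |deriv u x| ^ p)
      = ((p - 1) ^ 2 / (2 * p - 1)) *
        ((1 / (2 * π)) * ∫ x in (0:ℝ)..(2 * π), (u x) ^ (-p) * |deriv u x| ^ (2 * p)) ∧
    0 ≤ (1 / (2 * π)) *
      (∫ x in (0:ℝ)..(2 * π), (u x) ^ (1 - p) * pLap p u x * |deriv u x| ^ p) := by
  set w := deriv u with hw
  have hucont : Continuous u := hC2.continuous
  have hudiff : Differentiable ℝ u := hC2.differentiable (by norm_num)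
  have hwC1 : ContDiff ℝ 1 w := by
    have h2 : ContDiff ℝ (1 + 1 : ℕ) u := by norm_num; exact hC2
    exact (contDiff_succ_iff_deriv.mp h2).2.2
  have hwcont : Continuous w := hwC1.continuous
  have hwdiff : ∀ x, HasDerivAt w (deriv w x) x :=
    fun x => (hwC1.differentiable one_ne_zero x).hasDerivAt
  have hw'cont : Continuous (deriv w) := hwC1.continuous_deriv le_rfl
  -- pLap formula
  have hpLap : ∀ x, pLap p u x = (p - 1) * |w x| ^ (p - 2) * deriv w x := by
    intro x
    have hcomp := ((hasDerivAt_abs_rpow_mul (q := p - 2) (by linarith) (w x)).comp x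
      (hwdiff x))
    have hd := hcomp.deriv
    rw [pLap]
    rw [show (fun y => |deriv u y| ^ (p - 2) * deriv u y)
        = ((fun s : ℝ => |s| ^ (p - 2) * s) ∘ w) from rfl]
    rw [hd]; ring
  -- key square lemma
  have habs : ∀ a : ℝ, a * (|a| ^ (2 * p - 2) * a) = |a| ^ (2 * p) := by
    intro a
    rcases eq_or_ne a 0 with rfl | ha
    · simp [Real.zero_rpow (by linarith : (2 * p : ℝ) ≠ 0)]
    · have hab : (0:ℝ) < |a| := abs_pos.mpr ha
      rw [show (2 * p) = (2 * p - 2) + 2 by ring, Real.rpow_add hab,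
        show ((2:ℝ) = ((2:ℕ):ℝ)) by norm_num, Real.rpow_natCast, sq_abs]
      ring
  -- the derivative identity
  set G : ℝ → ℝ := fun x => (1 - p) * ((u x) ^ (-p) * |w x| ^ (2 * p))
      + (2 * p - 1) * ((u x) ^ (1 - p) * (|w x| ^ (2 * p - 2) * deriv w x)) with hG
  set H : ℝ → ℝ := fun y => (u y) ^ (1 - p) * (|w y| ^ (2 * p - 2) * w y) with hH
  have hHderiv : ∀ x, HasDerivAt H (G x) x := by
    intro x
    have h1 : HasDerivAt (fun y => (u y) ^ (1 - p)) (w x * (1 - p) * (u x) ^ (1 - p - 1)) x :=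
      (hudiff x).hasDerivAt.rpow_const (Or.inl (hpos x).ne')
    have h2 : HasDerivAt (fun y => |w y| ^ (2 * p - 2) * w y)
        ((2 * p - 2 + 1) * |w x| ^ (2 * p - 2) * deriv w x) x :=
      (hasDerivAt_abs_rpow_mul (by linarith) (w x)).comp x (hwdiff x)
    have h3 := h1.mul h2
    refine h3.congr_deriv ?_
    rw [hG, show (1 - p - 1) = -p by ring]
    have h4 := habs (w x)
    linear_combination (-(p - 1) * u x ^ (-p)) * h4
  have hGcont : Continuous G := by
    have c1 : Continuous fun x => (u x) ^ (-p) :=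
      hucont.rpow_const fun x => Or.inl (hpos x).ne'
    have c2 : Continuous fun x => |w x| ^ (2 * p) :=
      hwcont.abs.rpow_const fun x => Or.inr (by linarith)
    have c3 : Continuous fun x => (u x) ^ (1 - p) :=
      hucont.rpow_const fun x => Or.inl (hpos x).ne'
    have c4 : Continuous fun x => |w x| ^ (2 * p - 2) :=
      hwcont.abs.rpow_const fun x => Or.inr (by linarith)
    fun_prop
  set I1 : ℝ := ∫ x in (0:ℝ)..(2 * π), (u x) ^ (-p) * |w x| ^ (2 * p) with hI1
  set I2 : ℝ := ∫ x in (0:ℝ)..(2 * π), (u x) ^ (1 - p) * (|w x| ^ (2 * p - 2) * deriv w x)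
    with hI2
  have hGint : (∫ x in (0:ℝ)..(2 * π), G x) = 0 := by
    rw [intervalIntegral.integral_eq_sub_of_hasDerivAt (fun x _ => hHderiv x)
      (hGcont.intervalIntegrable _ _)]
    have h1 : u (2 * π) = u 0 := by simpa using hper 0
    have h2 : w (2 * π) = w 0 := by simpa using periodic_deriv' hper 0
    rw [hH]; simp only [h1, h2]; ring
  have c1 : Continuous fun x => (u x) ^ (-p) * |w x| ^ (2 * p) := by
    exact (hucont.rpow_const fun x => Or.inl (hpos x).ne').mul
      (hwcont.abs.rpow_const fun x => Or.inr (by linarith))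
  have c2 : Continuous fun x => (u x) ^ (1 - p) * (|w x| ^ (2 * p - 2) * deriv w x) := by
    exact (hucont.rpow_const fun x => Or.inl (hpos x).ne').mul
      ((hwcont.abs.rpow_const fun x => Or.inr (by linarith)).mul hw'cont)
  have hGsplit : (∫ x in (0:ℝ)..(2 * π), G x) = (1 - p) * I1 + (2 * p - 1) * I2 := by
    rw [hG]
    rw [intervalIntegral.integral_add
      (f := fun x => (1 - p) * ((u x) ^ (-p) * |w x| ^ (2 * p))) (g := fun x => (2 * p - 1) * ((u x) ^ (1 - p) * (|w x| ^ (2 * p - 2) * deriv w x)))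
      ((continuous_const.mul c1).intervalIntegrable _ _) ((continuous_const.mul c2).intervalIntegrable _ _),
      intervalIntegral.integral_const_mul, intervalIntegral.integral_const_mul]
  have hI2eq : (2 * p - 1) * I2 = (p - 1) * I1 := by
    have := hGint; rw [hGsplit] at this; linarith
  -- LHS integrand
  have hLHS : (∫ x in (0:ℝ)..(2 * π), (u x) ^ (1 - p) * pLap p u x * |w x| ^ p)
      = (p - 1) * I2 := by
    rw [hI2, ← intervalIntegral.integral_const_mul]
    apply intervalIntegral.integral_congr
    intro x _
    beta_reduce
    rw [hpLap x, show (2 * p - 2 : ℝ) = (p - 2) + p by ring,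
      Real.rpow_add' (abs_nonneg _) (by linarith : (p - 2) + p ≠ 0)]
    ring
  have hpi : (0:ℝ) < π := Real.pi_pos
  have hI1nonneg : 0 ≤ I1 := by
    rw [hI1]
    apply intervalIntegral.integral_nonneg (by positivity)
    intro x _
    have := hpos x
    positivity
  constructor
  · rw [hLHS]
    have h2p1 : (2 * p - 1 : ℝ) ≠ 0 := ne_of_gt (by linarith)
    have hpi' : (2 * π : ℝ) ≠ 0 := by positivity
    field_simp
    linear_combination (p - 1) * hI2eq
  · rw [hLHS]
    have h2p1 : (0:ℝ) < 2 * p - 1 := by linarith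
    have hI2nonneg : 0 ≤ I2 := by
      have h1 : 0 ≤ (p - 1) * I1 := mul_nonneg (by linarith) hI1nonneg
      nlinarith [hI2eq, h1]
    have h2 : 0 ≤ (p - 1) * I2 := mul_nonneg (by linarith) hI2nonneg
    have h3 : 0 ≤ 1 / (2 * π) := by positivity
    exact mul_nonneg h3 h2
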